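/- Data-processing inequality for E: if φ : X → Y is a Borel measurable map between Polish spaces and V, Ṽ are finite positive measures on X, then E(V | Ṽ) ≥ E(φ_# V | φ_# Ṽ), where φ_# denotes the pushforward. -/

import Mathlib

open MeasureTheory

/-- The extended relative entropy functional for finite positive measures, defined via the
dual variational formula `E(V | Ṽ) = sup_{ψ ∈ C_b(X)} { V(ψ) − Ṽ(e^ψ − 1) }`. -/
noncomputable def Efun {X : Type*} [MeasurableSpace X] [TopologicalSpace X]
    (V W : Measure X) : EReal :=
  ⨆ φ : BoundedContinuousFunction X ℝ,
    ((∫ x, φ x ∂V - ∫ x, (Real.exp (φ x) - 1) ∂W : ℝ) : EReal)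

/-- The clamp function to `[-M, M]` is 1-Lipschitz. -/
lemma clamp_lip (M a b : ℝ) :
    |max (-M) (min M a) - max (-M) (min M b)| ≤ |a - b| := by
  refine (abs_max_sub_max_le_max _ _ _ _).trans ?_
  simp only [sub_self, abs_zero]
  refine max_le (abs_nonneg _) ?_
  refine (abs_min_sub_min_le_max _ _ _ _).trans ?_
  simp [abs_nonneg]

/-- The clamp function fixes points of `[-M, M]`. -/
lemma clamp_eq_self {M a : ℝ} (h : |a| ≤ M) : max (-M) (min M a) = a := by
  rw [abs_le] at h
  rw [min_eq_right h.2, max_eq_right h.1]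

/-- One-sided local Lipschitz bound for the exponential. -/
lemma exp_lip' {M a b : ℝ} (hb : b ≤ M) (h : a ≤ b) :
    Real.exp b - Real.exp a ≤ Real.exp M * (b - a) := by
  have h1 : (a - b + 1) * Real.exp b ≤ Real.exp (a - b) * Real.exp b :=
    mul_le_mul_of_nonneg_right (Real.add_one_le_exp _) (Real.exp_pos b).le
  rw [← Real.exp_add, sub_add_cancel] at h1
  have h2 : Real.exp b ≤ Real.exp M := Real.exp_le_exp.2 hb
  nlinarith [Real.exp_pos b]

/-- Local Lipschitz bound for the exponential. -/
lemma exp_lip {M a b : ℝ} (ha : a ≤ M) (hb : b ≤ M) :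
    |Real.exp a - Real.exp b| ≤ Real.exp M * |a - b| := by
  rcases le_total a b with h | h
  · rw [abs_sub_comm, abs_of_nonneg (sub_nonneg.2 (Real.exp_le_exp.2 h)),
      abs_sub_comm, abs_of_nonneg (sub_nonneg.2 h)]
    exact exp_lip' hb h
  · rw [abs_of_nonneg (sub_nonneg.2 (Real.exp_le_exp.2 h)), abs_of_nonneg (sub_nonneg.2 h)]
    exact exp_lip' ha h

/-- The value of the dual functional at any bounded measurable function is dominated by
`Efun V W` (which is defined as a supremum over bounded *continuous* functions). -/
lemma value_le_Efun {X : Type*}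
    [MeasurableSpace X] [TopologicalSpace X] [PolishSpace X] [BorelSpace X]
    (V W : Measure X) [IsFiniteMeasure V] [IsFiniteMeasure W]
    (f : X → ℝ) (hf : Measurable f) (M : ℝ) (hM0 : 0 ≤ M) (hM : ∀ x, |f x| ≤ M) :
    ((∫ x, f x ∂V - ∫ x, (Real.exp (f x) - 1) ∂W : ℝ) : EReal) ≤ Efun V W := by
  letI := TopologicalSpace.upgradeIsCompletelyMetrizable X
  set r : ℝ := ∫ x, f x ∂V - ∫ x, (Real.exp (f x) - 1) ∂W with hr
  -- key approximation step: for every `δ > 0`, `r - δ ≤ Efun V W`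
  have key : ∀ δ : ℝ, 0 < δ → ((r - δ : ℝ) : EReal) ≤ Efun V W := by
    intro δ hδ
    set C : ℝ := 1 + Real.exp M with hC
    have hCpos : 0 < C := by positivity
    have hε : 0 < δ / C := div_pos hδ hCpos
    -- integrability of f w.r.t. V + W
    have hfi : Integrable f (V + W) := by
      refine (integrable_const M).mono' hf.aestronglyMeasurable ?_
      exact Filter.Eventually.of_forall fun x => by
        simpa [Real.norm_eq_abs] using hM x
    obtain ⟨g, hg, hgi⟩ := hfi.exists_boundedContinuous_integral_sub_le hε
    -- clamp g to [-M, M]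
    set g' : BoundedContinuousFunction X ℝ :=
      BoundedContinuousFunction.ofNormedAddCommGroup
        (fun x => max (-M) (min M (g x)))
        (by fun_prop) M
        (fun x => by
          rw [Real.norm_eq_abs, abs_le]
          constructor
          · exact le_max_left _ _
          · exact max_le (by linarith) (min_le_left _ _)) with hg'
    have hg'val : ∀ x, g' x = max (-M) (min M (g x)) := fun x => rfl
    -- pointwise comparison: |f x - g' x| ≤ |f x - g x|
    have hptw : ∀ x, |f x - g' x| ≤ |f x - g x| := by
      intro x
      have h := clamp_lip M (f x) (g x)
      rw [clamp_eq_self (hM x)] at h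
      rw [hg'val]
      exact h
    -- integral bound for |f - g'| against V + W
    have hIfg : Integrable (fun x => |f x - g x|) (V + W) :=
      (hfi.sub hgi).abs
    have hbound : ∀ (μ : Measure X), μ ≤ V + W → ∫ x, |f x - g' x| ∂μ ≤ δ / C := by
      intro μ hμ
      have h1 : ∫ x, |f x - g' x| ∂μ ≤ ∫ x, |f x - g x| ∂μ := by
        haveI : IsFiniteMeasure μ := by
          constructor
          exact lt_of_le_of_lt (hμ Set.univ) (measure_lt_top _ _)
        refine integral_mono ?_ ?_ hptw
        · refine (integrable_const (2 * M)).mono'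
            ((hf.sub g'.continuous.measurable).abs.aestronglyMeasurable) ?_
          refine Filter.Eventually.of_forall fun x => ?_
          have h2 := hM x
          have h3 : |g' x| ≤ M := by
            rw [hg'val, abs_le]
            exact ⟨le_max_left _ _, max_le (by linarith) (min_le_left _ _)⟩
          rw [Real.norm_eq_abs, abs_abs]
          calc |f x - g' x| ≤ |f x| + |g' x| := abs_sub _ _
            _ ≤ 2 * M := by linarith
        · exact (hIfg.mono_measure hμ)
      have h2 : ∫ x, |f x - g x| ∂μ ≤ ∫ x, |f x - g x| ∂(V + W) :=
        integral_mono_measure hμ (Filter.Eventually.of_forall fun x => abs_nonneg _) hIfg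
      have h3 : ∫ x, |f x - g x| ∂(V + W) ≤ δ / C := by
        simpa [Real.norm_eq_abs] using hg
      linarith
    have hV : ∫ x, |f x - g' x| ∂V ≤ δ / C := hbound V (Measure.le_add_right le_rfl)
    have hW : ∫ x, |f x - g' x| ∂W ≤ δ / C := hbound W (Measure.le_add_left le_rfl)
    -- integrability facts over V and W
    have hfiV : Integrable f V := hfi.mono_measure (Measure.le_add_right le_rfl)
    have hg'iV : Integrable g' V := g'.integrable V
    have hfeW : Integrable (fun x => Real.exp (f x) - 1) W := by
      refine (integrable_const (Real.exp M + 1)).mono'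
        ((hf.exp.sub measurable_const).aestronglyMeasurable) ?_
      refine Filter.Eventually.of_forall fun x => ?_
      have h1 : Real.exp (f x) ≤ Real.exp M := Real.exp_le_exp.2 ((abs_le.1 (hM x)).2)
      have h2 : 0 < Real.exp (f x) := Real.exp_pos _
      rw [Real.norm_eq_abs, abs_le]
      constructor <;> nlinarith [Real.exp_pos M]
    have hg'eW : Integrable (fun x => Real.exp (g' x) - 1) W := by
      refine (integrable_const (Real.exp M + 1)).mono'
        ((g'.continuous.measurable.exp.sub measurable_const).aestronglyMeasurable) ?_
      refine Filter.Eventually.of_forall fun x => ?_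
      have hb : |g' x| ≤ M := by
        rw [hg'val, abs_le]
        exact ⟨le_max_left _ _, max_le (by linarith) (min_le_left _ _)⟩
      have h1 : Real.exp (g' x) ≤ Real.exp M := Real.exp_le_exp.2 ((abs_le.1 hb).2)
      have h2 : 0 < Real.exp (g' x) := Real.exp_pos _
      rw [Real.norm_eq_abs, abs_le]
      constructor <;> nlinarith [Real.exp_pos M]
    -- first integral estimate
    have est1 : |∫ x, f x ∂V - ∫ x, g' x ∂V| ≤ δ / C := by
      rw [← integral_sub hfiV hg'iV]
      refine le_trans ?_ hV
      simpa [Real.norm_eq_abs] using norm_integral_le_integral_norm (fun x => f x - g' x) (μ := V)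
    -- second integral estimate
    have est2 : |∫ x, (Real.exp (f x) - 1) ∂W - ∫ x, (Real.exp (g' x) - 1) ∂W|
        ≤ Real.exp M * (δ / C) := by
      rw [← integral_sub hfeW hg'eW]
      refine le_trans (by
        simpa [Real.norm_eq_abs] using norm_integral_le_integral_norm
          (fun x => Real.exp (f x) - 1 - (Real.exp (g' x) - 1)) (μ := W)) ?_
      have hptw2 : ∀ x, |Real.exp (f x) - Real.exp (g' x)|
          ≤ Real.exp M * |f x - g' x| := by
        intro x
        have hb : |g' x| ≤ M := by
          rw [hg'val, abs_le]
          exact ⟨le_max_left _ _, max_le (by linarith) (min_le_left _ _)⟩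
        exact exp_lip (M := M) ((abs_le.1 (hM x)).2) ((abs_le.1 hb).2)
      have hint : Integrable (fun x => Real.exp M * |f x - g' x|) W :=
        ((hfi.mono_measure (Measure.le_add_left le_rfl)).sub (g'.integrable W)).abs.const_mul _
      calc ∫ x, |Real.exp (f x) - Real.exp (g' x)| ∂W
          ≤ ∫ x, Real.exp M * |f x - g' x| ∂W := by
            refine integral_mono (by simpa [sub_sub_sub_cancel_right] using (hfeW.sub hg'eW).abs)
              hint hptw2
        _ = Real.exp M * ∫ x, |f x - g' x| ∂W := integral_const_mul _ _
        _ ≤ Real.exp M * (δ / C) := by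
            exact mul_le_mul_of_nonneg_left hW (Real.exp_pos M).le
    -- combine
    have hcomb : r - δ ≤ ∫ x, g' x ∂V - ∫ x, (Real.exp (g' x) - 1) ∂W := by
      have hCδ : C * (δ / C) = δ := mul_div_cancel₀ δ hCpos.ne'
      have e1 := abs_le.1 est1
      have e2 := abs_le.1 est2
      rw [hr]
      nlinarith [e1.1, e1.2, e2.1, e2.2]
    calc ((r - δ : ℝ) : EReal)
        ≤ ((∫ x, g' x ∂V - ∫ x, (Real.exp (g' x) - 1) ∂W : ℝ) : EReal) := by
          exact_mod_cast hcomb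
      _ ≤ Efun V W := le_iSup (fun ψ : BoundedContinuousFunction X ℝ =>
          ((∫ x, ψ x ∂V - ∫ x, (Real.exp (ψ x) - 1) ∂W : ℝ) : EReal)) g'
  -- conclude using density
  refine le_of_forall_lt_imp_le_of_dense fun c hc => ?_
  induction c with
  | bot => exact bot_le
  | coe c =>
    have hcr : c < r := by exact_mod_cast hc
    have := key (r - c) (by linarith)
    simpa using this
  | top => exact absurd hc (by simp [not_lt, le_top])

/-- Data-processing inequality for `E`: pushing forward along a Borel measurable map
between Polish spaces decreases the functional. -/
theorem Efun_dataProcessing {X Y : Type*}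
    [MeasurableSpace X] [TopologicalSpace X] [PolishSpace X] [BorelSpace X]
    [MeasurableSpace Y] [TopologicalSpace Y] [PolishSpace Y] [BorelSpace Y]
    (φ : X → Y) (hφ : Measurable φ)
    (V W : Measure X) [IsFiniteMeasure V] [IsFiniteMeasure W] :
    Efun (V.map φ) (W.map φ) ≤ Efun V W := by
  rw [Efun]
  refine iSup_le fun ψ => ?_
  have h1 : ∫ y, ψ y ∂(V.map φ) = ∫ x, ψ (φ x) ∂V :=
    integral_map hφ.aemeasurable ψ.continuous.aestronglyMeasurable
  have h2 : ∫ y, (Real.exp (ψ y) - 1) ∂(W.map φ) = ∫ x, (Real.exp (ψ (φ x)) - 1) ∂W :=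
    integral_map hφ.aemeasurable
      ((Real.continuous_exp.comp ψ.continuous).sub continuous_const).aestronglyMeasurable
  rw [h1, h2]
  refine value_le_Efun V W (fun x => ψ (φ x))
    (ψ.continuous.measurable.comp hφ) ‖ψ‖ (norm_nonneg ψ) fun x => ?_
  simpa [Real.norm_eq_abs] using ψ.norm_coe_le_norm (φ x)
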